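/- Let M ≥ 1, β > 0, and let s ∈ {-1,1}^M be a random vector with i.i.d. entries each having mean m₀ ∈ [0,1), where the law of each entry is P(s_μ = ±1) = (1 ± m₀)/2. If p ∈ ℝ^M satisfies p_μ = E_s[ s_μ tanh(β s·p) ] for all μ, and β(1 − m₀²) < 1, then all components of p are equal: p_μ = p_ν for all μ, ν. -/

import Mathlib

open Finset Real

noncomputable def chi (b : Bool) : ℝ := if b then 1 else -1

noncomputable def Wt (m₀ : ℝ) {M : ℕ} (s : Fin M → Bool) : ℝ :=
  ∏ ρ, (1 + chi (s ρ) * m₀) / 2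

noncomputable def Sf {M : ℕ} (p : Fin M → ℝ) (s : Fin M → Bool) : ℝ :=
  ∑ ρ, chi (s ρ) * p ρ

lemma my_tanh_hasDerivAt (x : ℝ) : HasDerivAt Real.tanh (1 / Real.cosh x ^ 2) x := by
  have h := (Real.hasDerivAt_sinh x).div (Real.hasDerivAt_cosh x) (ne_of_gt (Real.cosh_pos x))
  have he : Real.tanh = fun y => Real.sinh y / Real.cosh y :=
    funext fun y => Real.tanh_eq_sinh_div_cosh y
  rw [he]
  refine h.congr_deriv ?_
  have h2 := Real.cosh_sq_sub_sinh_sq x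
  have h3 := Real.cosh_pos x
  field_simp
  nlinarith

lemma my_tanh_lip (a b : ℝ) : |Real.tanh a - Real.tanh b| ≤ |a - b| := by
  have hL : LipschitzWith 1 Real.tanh := by
    apply lipschitzWith_of_nnnorm_deriv_le
    · exact fun x => (my_tanh_hasDerivAt x).differentiableAt
    · intro x
      rw [(my_tanh_hasDerivAt x).deriv]
      have h1 : ‖(1 / Real.cosh x ^ 2 : ℝ)‖ ≤ 1 := by
        rw [Real.norm_eq_abs, abs_of_nonneg (by positivity)]
        rw [div_le_one (by positivity)]
        nlinarith [Real.one_le_cosh x]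
      exact_mod_cast h1
  have := hL.dist_le_mul a b
  simpa [Real.dist_eq] using this

lemma my_sum_prod_bool {M : ℕ} (g : Fin M → Bool → ℝ) :
    ∑ s : Fin M → Bool, ∏ ρ, g ρ (s ρ) = ∏ ρ, (g ρ true + g ρ false) := by
  rw [← Fintype.prod_sum g]
  exact Fintype.prod_congr _ _ fun ρ => by simp

lemma my_two_point_sum {M : ℕ} {μ ν : Fin M} (hμν : μ ≠ ν) (F : Fin M → ℝ)
    (h0 : ∀ ρ, ρ ≠ μ → ρ ≠ ν → F ρ = 0) : ∑ ρ, F ρ = F μ + F ν := by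
  rw [← Finset.sum_subset (Finset.subset_univ ({μ, ν} : Finset (Fin M)))
      (fun x _ hx => by
        simp only [Finset.mem_insert, Finset.mem_singleton] at hx
        exact h0 x (fun h => hx (Or.inl h)) (fun h => hx (Or.inr h)))]
  exact Finset.sum_pair hμν

lemma my_two_point_prod {M : ℕ} {μ ν : Fin M} (hμν : μ ≠ ν) (F : Fin M → ℝ)
    (h0 : ∀ ρ, ρ ≠ μ → ρ ≠ ν → F ρ = 1) : ∏ ρ, F ρ = F μ * F ν := by
  rw [← Finset.prod_subset (Finset.subset_univ ({μ, ν} : Finset (Fin M)))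
      (fun x _ hx => by
        simp only [Finset.mem_insert, Finset.mem_singleton] at hx
        exact h0 x (fun h => hx (Or.inl h)) (fun h => hx (Or.inr h)))]
  exact Finset.prod_pair hμν

lemma Wt_nonneg {m₀ : ℝ} (hm₀0 : -1 ≤ m₀) (hm₀1 : m₀ ≤ 1) {M : ℕ} (s : Fin M → Bool) :
    0 ≤ Wt m₀ s := by
  apply Finset.prod_nonneg
  intro ρ _
  cases h : s ρ <;> simp [chi] <;> linarith

lemma Wt_sum {m₀ : ℝ} {M : ℕ} : ∑ s : Fin M → Bool, Wt m₀ s = 1 := by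
  have h := my_sum_prod_bool (M := M) (fun ρ b => (1 + chi b * m₀) / 2)
  simp only [Wt]
  rw [h]
  have : ∀ ρ : Fin M,
      ((1 + chi true * m₀) / 2 + (1 + chi false * m₀) / 2) = 1 := by
    intro ρ; simp [chi]; ring
  rw [Finset.prod_congr rfl (fun ρ _ => this ρ), Finset.prod_const_one]

lemma Wt_corr {m₀ : ℝ} {M : ℕ} {μ ν : Fin M} (hμν : μ ≠ ν) :
    ∑ s : Fin M → Bool, Wt m₀ s * (chi (s μ) * chi (s ν)) = m₀ ^ 2 := by
  have hstep : ∀ s : Fin M → Bool,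
      Wt m₀ s * (chi (s μ) * chi (s ν)) =
        ∏ ρ, ((1 + chi (s ρ) * m₀) / 2 *
          (if ρ = μ then chi (s ρ) else if ρ = ν then chi (s ρ) else 1)) := by
    intro s
    rw [Finset.prod_mul_distrib]
    congr 1
    rw [my_two_point_prod hμν _
      (fun ρ h1 h2 => by simp [h1, h2])]
    simp [hμν, Ne.symm hμν]
  calc ∑ s : Fin M → Bool, Wt m₀ s * (chi (s μ) * chi (s ν))
      = ∑ s : Fin M → Bool, ∏ ρ, ((1 + chi (s ρ) * m₀) / 2 *
          (if ρ = μ then chi (s ρ) else if ρ = ν then chi (s ρ) else 1)) :=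
        Finset.sum_congr rfl (fun s _ => hstep s)
    _ = ∏ ρ : Fin M, ((1 + chi true * m₀) / 2 *
          (if ρ = μ then chi true else if ρ = ν then chi true else 1) +
        (1 + chi false * m₀) / 2 *
          (if ρ = μ then chi false else if ρ = ν then chi false else 1)) :=
        my_sum_prod_bool (fun ρ b => (1 + chi b * m₀) / 2 *
          (if ρ = μ then chi b else if ρ = ν then chi b else 1))
    _ = m₀ ^ 2 := by
        rw [my_two_point_prod hμν _
          (fun ρ h1 h2 => by simp [h1, h2, chi]; ring)]
        simp [hμν, Ne.symm hμν, chi]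
        ring

lemma Wt_moment {m₀ : ℝ} {M : ℕ} {μ ν : Fin M} (hμν : μ ≠ ν) :
    ∑ s : Fin M → Bool, Wt m₀ s * (chi (s μ) - chi (s ν)) ^ 2 = 2 - 2 * m₀ ^ 2 := by
  have hsq : ∀ a b : Bool, (chi a - chi b) ^ 2 = 2 - 2 * (chi a * chi b) := by
    intro a b; cases a <;> cases b <;> norm_num [chi]
  have : ∀ s : Fin M → Bool, Wt m₀ s * (chi (s μ) - chi (s ν)) ^ 2 =
      2 * Wt m₀ s - 2 * (Wt m₀ s * (chi (s μ) * chi (s ν))) := by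
    intro s; rw [hsq]; ring
  rw [Finset.sum_congr rfl (fun s _ => this s), Finset.sum_sub_distrib,
    ← Finset.mul_sum, ← Finset.mul_sum, Wt_sum, Wt_corr hμν]
  ring

lemma homog_aux (M : ℕ) (β m₀ : ℝ) (hβ : 0 < β)
    (hm₀0 : 0 ≤ m₀) (hm₀1 : m₀ < 1) (hslope : β * (1 - m₀ ^ 2) < 1)
    (p : Fin M → ℝ) (μ ν : Fin M) (hμν : μ ≠ ν)
    (hd : p μ - p ν = ∑ s : Fin M → Bool,
      Wt m₀ s * ((chi (s μ) - chi (s ν)) * Real.tanh (β * Sf p s))) :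
    p μ = p ν := by
  set d : ℝ := p μ - p ν with hdd
  set T : (Fin M → Bool) → (Fin M → Bool) := fun s ρ => s (Equiv.swap μ ν ρ) with hT
  set f : (Fin M → Bool) → ℝ :=
    fun s => Wt m₀ s * ((chi (s μ) - chi (s ν)) * Real.tanh (β * Sf p s)) with hf
  have hTinv : Function.Involutive T := by
    intro s; funext ρ; simp [hT, Equiv.swap_apply_self]
  have hTw : ∀ s, Wt m₀ (T s) = Wt m₀ s := by
    intro s
    exact Equiv.prod_comp (Equiv.swap μ ν) (fun ρ => (1 + chi (s ρ) * m₀) / 2)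
  have hTS : ∀ s, Sf p (T s) = Sf p s - (chi (s μ) - chi (s ν)) * d := by
    intro s
    have e1 : Sf p (T s) = ∑ ρ, chi (s ρ) * p (Equiv.swap μ ν ρ) := by
      rw [show Sf p (T s) = ∑ ρ, chi (s (Equiv.swap μ ν ρ)) * p ρ from rfl,
        ← Equiv.sum_comp (Equiv.swap μ ν)
          (fun ρ => chi (s (Equiv.swap μ ν ρ)) * p ρ)]
      exact Finset.sum_congr rfl fun ρ _ => by rw [Equiv.swap_apply_self]
    have e2 : Sf p (T s) - Sf p s = ∑ ρ, chi (s ρ) * (p (Equiv.swap μ ν ρ) - p ρ) := by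
      rw [e1, Sf, ← Finset.sum_sub_distrib]
      exact Finset.sum_congr rfl fun ρ _ => by ring
    have e3 : ∑ ρ, chi (s ρ) * (p (Equiv.swap μ ν ρ) - p ρ) =
        chi (s μ) * (p (Equiv.swap μ ν μ) - p μ) +
        chi (s ν) * (p (Equiv.swap μ ν ν) - p ν) :=
      my_two_point_sum hμν _ (fun ρ h1 h2 => by
        rw [Equiv.swap_apply_of_ne_of_ne h1 h2]; ring)
    rw [Equiv.swap_apply_left, Equiv.swap_apply_right] at e3
    have := e2.trans e3
    rw [hdd]; linarith [this]
  have h1 : ∑ s : Fin M → Bool, f (T s) = ∑ s : Fin M → Bool, f s :=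
    Fintype.sum_bijective T hTinv.bijective _ _ (fun s => rfl)
  have h2 : 2 * d = ∑ s : Fin M → Bool, (f s + f (T s)) := by
    rw [Finset.sum_add_distrib, h1, ← hd]; ring
  have hbound : ∀ s : Fin M → Bool,
      |f s + f (T s)| ≤ Wt m₀ s * (chi (s μ) - chi (s ν)) ^ 2 * (β * |d|) := by
    intro s
    have hTμ : (T s) μ = s ν := by rw [hT]; simp [Equiv.swap_apply_left]
    have hTν : (T s) ν = s μ := by rw [hT]; simp [Equiv.swap_apply_right]
    have hfT : f (T s) = Wt m₀ s * ((chi (s ν) - chi (s μ)) *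
        Real.tanh (β * (Sf p s - (chi (s μ) - chi (s ν)) * d))) := by
      rw [hf]
      simp only [hTμ, hTν, hTw s, hTS s]
    have hsum : f s + f (T s) = Wt m₀ s * ((chi (s μ) - chi (s ν)) *
        (Real.tanh (β * Sf p s) -
          Real.tanh (β * (Sf p s - (chi (s μ) - chi (s ν)) * d)))) := by
      rw [hfT, hf]; ring
    rw [hsum]
    set A : ℝ := chi (s μ) - chi (s ν) with hA
    set t : ℝ := Real.tanh (β * Sf p s) -
      Real.tanh (β * (Sf p s - A * d)) with ht
    have hw : 0 ≤ Wt m₀ s := Wt_nonneg (by linarith) (by linarith) s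
    have h5 : |t| ≤ β * (|A| * |d|) := by
      have := my_tanh_lip (β * Sf p s) (β * (Sf p s - A * d))
      have heq : β * Sf p s - β * (Sf p s - A * d) = β * (A * d) := by ring
      rw [heq] at this
      calc |t| ≤ |β * (A * d)| := this
        _ = β * (|A| * |d|) := by
            rw [abs_mul, abs_mul, abs_of_pos hβ]
    calc |Wt m₀ s * (A * t)| = Wt m₀ s * (|A| * |t|) := by
          rw [abs_mul, abs_mul, abs_of_nonneg hw]
      _ ≤ Wt m₀ s * (|A| * (β * (|A| * |d|))) := by
          apply mul_le_mul_of_nonneg_left _ hw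
          exact mul_le_mul_of_nonneg_left h5 (abs_nonneg A)
      _ = Wt m₀ s * A ^ 2 * (β * |d|) := by
          rw [← sq_abs A]; ring
  have h6 : 2 * |d| ≤ (2 - 2 * m₀ ^ 2) * (β * |d|) := by
    have h7 : |2 * d| ≤ ∑ s : Fin M → Bool,
        Wt m₀ s * (chi (s μ) - chi (s ν)) ^ 2 * (β * |d|) := by
      rw [h2]
      exact (Finset.abs_sum_le_sum_abs _ _).trans
        (Finset.sum_le_sum fun s _ => hbound s)
    rw [abs_mul, abs_two] at h7
    rw [← Finset.sum_mul, Wt_moment hμν] at h7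
    exact h7
  have h8 : |d| = 0 := by nlinarith [abs_nonneg d]
  have : d = 0 := abs_eq_zero.mp h8
  rw [hdd] at this; linarith

theorem selfconsistency_solutions_homogeneous
    (M : ℕ) (hM : 1 ≤ M) (β m₀ : ℝ) (hβ : 0 < β)
    (hm₀0 : 0 ≤ m₀) (hm₀1 : m₀ < 1)
    (hslope : β * (1 - m₀ ^ 2) < 1)
    (p : Fin M → ℝ)
    (hp : ∀ μ : Fin M,
      p μ = ∑ s : Fin M → Bool,
        (∏ ν : Fin M, ((1 + (if s ν then (1:ℝ) else -1) * m₀) / 2)) *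
          ((if s μ then (1:ℝ) else -1) *
            Real.tanh (β * ∑ ν : Fin M, (if s ν then (1:ℝ) else -1) * p ν))) :
    ∀ μ ν : Fin M, p μ = p ν := by
  intro μ ν
  by_cases hμν : μ = ν
  · rw [hμν]
  · apply homog_aux M β m₀ hβ hm₀0 hm₀1 hslope p μ ν hμν
    rw [hp μ, hp ν, ← Finset.sum_sub_distrib]
    refine Finset.sum_congr rfl fun s _ => ?_
    simp only [Wt, Sf, chi]
    ring
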